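/- Consider the planar ODE ψ' = −θ² − (4/3)ρψθ², θ' = 2ψθ with ρ > 0. The set of equilibrium points is exactly the ψ-axis {(ψ,0) : ψ ∈ ℝ}, and no solution trajectory with initial condition θ(0) ≠ 0 converges to a point (b,0) with b ≥ 0; in particular the system does not converge to the origin from any starting point off the ψ-axis. -/

import Mathlib

open Filter Set intervalIntegral

theorem stmt7 (ρ : ℝ) (hρ : 0 < ρ) :
    (∀ p : ℝ × ℝ,
      ((-p.2 ^ 2 - (4 / 3) * ρ * p.1 * p.2 ^ 2, 2 * p.1 * p.2) = ((0 : ℝ), (0 : ℝ)) ↔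
        p.2 = 0)) ∧
    ∀ ψ θ : ℝ → ℝ,
      (∀ t, HasDerivAt ψ (-(θ t) ^ 2 - (4 / 3) * ρ * ψ t * (θ t) ^ 2) t) →
      (∀ t, HasDerivAt θ (2 * ψ t * θ t) t) →
      θ 0 ≠ 0 →
      ∀ b : ℝ, 0 ≤ b →
        ¬ Filter.Tendsto (fun t => (ψ t, θ t)) Filter.atTop (nhds (b, 0)) := by
  constructor
  · intro p
    constructor
    · intro h
      rw [Prod.mk.injEq] at h
      obtain ⟨h1, h2⟩ := h
      by_contra hne
      rcases mul_eq_zero.mp h2 with h | h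
      · rcases mul_eq_zero.mp h with h | h
        · norm_num at h
        · rw [h] at h1
          have : p.2 ^ 2 = 0 := by linarith [h1]
          exact hne (pow_eq_zero_iff two_ne_zero |>.mp this)
      · exact hne h
    · intro h; rw [h]; ring_nf
  · intro ψ θ hψ hθ hθ0 b hb hcon
    have hψc : Continuous ψ :=
      continuous_iff_continuousAt.mpr fun t => (hψ t).continuousAt
    -- θ never vanishes
    have hθne : ∀ t, θ t ≠ 0 := by
      set I : ℝ → ℝ := fun t => ∫ s in (0:ℝ)..t, 2 * ψ s with hIdef
      have hc2 : Continuous (fun s => 2 * ψ s) := continuous_const.mul hψc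
      have hI : ∀ t, HasDerivAt I (2 * ψ t) t := by
        intro t
        exact integral_hasDerivAt_right (hc2.intervalIntegrable 0 t)
          (hc2.stronglyMeasurableAtFilter _ _) hc2.continuousAt
      set g : ℝ → ℝ := fun t => θ t * Real.exp (-I t) with hgdef
      have hg : ∀ t, HasDerivAt g 0 t := by
        intro t
        have h1 : HasDerivAt (fun t => Real.exp (-I t)) (-(2 * ψ t) * Real.exp (-I t)) t := by
          have := ((hI t).neg).exp
          exact this.congr_deriv (by simp only [Pi.neg_apply]; ring)
        have := (hθ t).mul h1
        exact this.congr_deriv (by ring)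
      have hgc : ∀ t, g t = g 0 := by
        intro t
        exact is_const_of_deriv_eq_zero (fun x => (hg x).differentiableAt)
          (fun x => (hg x).deriv) t 0
      intro t ht
      have := hgc t
      rw [hgdef] at this
      simp only [ht, zero_mul] at this
      have h0 : θ 0 * Real.exp (-I 0) ≠ 0 :=
        mul_ne_zero hθ0 (Real.exp_ne_zero _)
      exact h0 this.symm
    -- limits of components
    have hψb : Tendsto ψ atTop (nhds b) := by
      have := (continuous_fst.tendsto (b, (0:ℝ))).comp hcon
      exact this
    have hθ0' : Tendsto θ atTop (nhds 0) := by
      have := (continuous_snd.tendsto (b, (0:ℝ))).comp hcon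
      exact this
    -- eventually ψ > b - δ with δ = 3/(8ρ)
    set δ : ℝ := 3 / (8 * ρ) with hδdef
    have hδpos : 0 < δ := by positivity
    have hev : ∀ᶠ t in atTop, b - δ < ψ t :=
      hψb.eventually (eventually_gt_nhds (by linarith))
    obtain ⟨T, hT⟩ := eventually_atTop.mp hev
    -- on [T, ∞), deriv ψ < 0
    have hbig : ∀ t, T ≤ t → 0 < 1 + (4/3) * ρ * ψ t := by
      intro t ht
      have h1 := hT t ht
      have : -δ < ψ t := by linarith
      rw [hδdef] at this
      have h2 : (4/3) * ρ * ψ t > (4/3) * ρ * (-(3 / (8 * ρ))) := by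
        apply mul_lt_mul_of_pos_left _ (by positivity)
        linarith
      have h3 : (4/3) * ρ * (-(3 / (8 * ρ))) = -(1/2) := by
        field_simp
        ring
      linarith
    have hderivneg : ∀ t ∈ interior (Ici T), deriv ψ t < 0 := by
      intro t ht
      rw [interior_Ici] at ht
      have hTt : T ≤ t := le_of_lt ht
      rw [(hψ t).deriv]
      have h1 := hbig t hTt
      have h2 : 0 < (θ t) ^ 2 := pow_two_pos_of_ne_zero (hθne t)
      nlinarith
    have hanti : StrictAntiOn ψ (Ici T) :=
      strictAntiOn_of_deriv_neg (convex_Ici T) (hψc.continuousOn) hderivneg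
    by_cases hpos : ∀ t, T ≤ t → 0 < ψ t
    · -- θ² strictly increasing, contradicting θ → 0 with θ ≠ 0
      have hf : ∀ t, HasDerivAt (fun t => θ t ^ 2) (2 * θ t * (2 * ψ t * θ t)) t := by
        intro t
        have := ((hθ t).pow 2)
        exact this.congr_deriv (by ring)
      have hfc : Continuous (fun t => θ t ^ 2) :=
        continuous_iff_continuousAt.mpr fun t => (hf t).continuousAt
      have hderivpos : ∀ t ∈ interior (Ici T), deriv (fun t => θ t ^ 2) t > 0 := by
        intro t ht
        rw [interior_Ici] at ht
        rw [(hf t).deriv]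
        have h1 := hpos t (le_of_lt ht)
        have h2 : 0 < (θ t) ^ 2 := pow_two_pos_of_ne_zero (hθne t)
        nlinarith
      have hmono : StrictMonoOn (fun t => θ t ^ 2) (Ici T) :=
        strictMonoOn_of_deriv_pos (convex_Ici T) hfc.continuousOn hderivpos
      have hlim : Tendsto (fun t => θ t ^ 2) atTop (nhds 0) := by
        have := hθ0'.pow 2
        simpa using this
      have hge : (0:ℝ) ≥ θ T ^ 2 := by
        apply ge_of_tendsto hlim
        filter_upwards [eventually_ge_atTop T] with t ht
        rcases eq_or_lt_of_le ht with rfl | h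
        · exact le_refl _
        · exact le_of_lt (hmono (self_mem_Ici) (le_of_lt h) h)
      have : 0 < θ T ^ 2 := pow_two_pos_of_ne_zero (hθne T)
      linarith
    · -- some ψ t0 ≤ 0, then ψ < ψ (t0+1) < 0 eventually, contradicting b ≥ 0
      push_neg at hpos
      obtain ⟨t0, ht0T, ht0⟩ := hpos
      have h1 : ψ (t0 + 1) < ψ t0 :=
        hanti ht0T (by linarith : T ≤ t0 + 1) (by linarith)
      have hble : b ≤ ψ (t0 + 1) := by
        apply le_of_tendsto hψb
        filter_upwards [eventually_ge_atTop (t0 + 1)] with t ht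
        rcases eq_or_lt_of_le ht with rfl | h
        · exact le_refl _
        · exact le_of_lt (hanti (by linarith : T ≤ t0 + 1) (by linarith : T ≤ t) h)
      linarith
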